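/- For every degree ℓ ≥ 0, order −ℓ ≤ m ≤ ℓ, and point (λ,θ), the spherical harmonic satisfies |Y_ℓ^m(λ,θ)| ≤ √((2ℓ+1)/(4π)). -/

import Mathlib

/-- The Legendre polynomial `P_ℓ` via the Rodrigues formula. -/
noncomputable def legendreP (l : ℕ) : Polynomial ℝ :=
  Polynomial.C (1 / (2 ^ l * (Nat.factorial l) : ℝ)) *
    (Polynomial.derivative^[l] ((Polynomial.X ^ 2 - 1) ^ l))

/-- The associated Legendre function `P_ℓ^m(x) = (−1)^m (1−x²)^{m/2} dᵐ/dxᵐ P_ℓ(x)`. -/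
noncomputable def assocLegendre (l m : ℕ) (x : ℝ) : ℝ :=
  (-1 : ℝ) ^ m * (Real.sqrt (1 - x ^ 2)) ^ m *
    (Polynomial.derivative^[m] (legendreP l)).eval x

/-- The spherical harmonic `Y_ℓ^m(λ,θ)` with the usual orthonormal normalization,
with `Y_ℓ^{−m} = (−1)^m conj(Y_ℓ^m)` for negative orders. -/
noncomputable def sphY (l : ℕ) (m : ℤ) (lam θ : ℝ) : ℂ :=
  if 0 ≤ m then
    ((Real.sqrt ((2 * l + 1) / (4 * Real.pi)) *
      Real.sqrt ((Nat.factorial (l - m.toNat) : ℝ) / (Nat.factorial (l + m.toNat))) *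
      assocLegendre l m.toNat (Real.cos θ) : ℝ) : ℂ) *
      Complex.exp (Complex.I * (m : ℝ) * lam)
  else
    (-1 : ℂ) ^ m.natAbs * (starRingEnd ℂ)
      (((Real.sqrt ((2 * l + 1) / (4 * Real.pi)) *
        Real.sqrt ((Nat.factorial (l - m.natAbs) : ℝ) / (Nat.factorial (l + m.natAbs))) *
        assocLegendre l m.natAbs (Real.cos θ) : ℝ) : ℂ) *
        Complex.exp (Complex.I * (m.natAbs : ℝ) * lam))


open Polynomial

noncomputable def rodU (l : ℕ) : ℝ[X] := ((X : ℝ[X]) ^ 2 - 1) ^ l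





lemma pearson (l : ℕ) :
    ((X : ℝ[X]) ^ 2 - 1) * derivative (rodU l) = C (2 * l : ℝ) * X * rodU l := by
  cases l with
  | zero => simp [rodU]
  | succ k =>
    unfold rodU
    rw [derivative_pow]
    simp only [Nat.add_sub_cancel, derivative_sub, derivative_one, derivative_X_pow,
      sub_zero, pow_one, Nat.cast_ofNat]
    simp only [map_sub, map_add, map_mul, map_one, map_zero, map_ofNat, map_natCast,
      Nat.cast_add, Nat.cast_one]
    ring

lemma ode_u (l : ℕ) (n : ℕ) :
    ((X : ℝ[X]) ^ 2 - 1) * derivative^[n + 2] (rodU l)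
      + C (2 * (n + 1) - 2 * l : ℝ) * X * derivative^[n + 1] (rodU l)
      + C ((n + 1) * n - 2 * l * (n + 1) : ℝ) * derivative^[n] (rodU l) = 0 := by
  induction n with
  | zero =>
    have h := congrArg derivative (pearson l)
    simp only [derivative_mul, derivative_C, derivative_X, derivative_sub, derivative_one,
      derivative_X_pow, zero_mul, mul_one, zero_add, mul_zero, add_zero, sub_zero, one_mul,
      Nat.cast_ofNat, pow_one, show (2:ℕ)-1 = 1 from rfl] at h
    simp only [Function.iterate_succ_apply', Function.iterate_zero_apply,
      Function.iterate_one]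
    simp only [map_sub, map_add, map_mul, map_one, map_zero, map_ofNat, map_natCast,
      Nat.cast_add, Nat.cast_one, Nat.cast_zero, Nat.cast_mul] at h ⊢
    linear_combination h
  | succ n ih =>
    have h := congrArg derivative ih
    simp only [derivative_add, derivative_mul, derivative_C, derivative_X, derivative_sub,
      derivative_one, derivative_X_pow, zero_mul, mul_one, zero_add, mul_zero, add_zero,
      sub_zero, one_mul, derivative_zero, Nat.cast_ofNat, pow_one,
      ← Function.iterate_succ_apply'] at h
    simp only [Nat.succ_eq_add_one, show n + 2 + 1 = n + 1 + 1 + 1 from rfl,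
      show n + 2 = n + 1 + 1 from rfl] at h ⊢
    simp only [map_sub, map_add, map_mul, map_one, map_zero, map_ofNat, map_natCast,
      Nat.cast_add, Nat.cast_one, Nat.cast_zero, Nat.cast_mul] at h ⊢
    linear_combination h





lemma gP_eq (l m : ℕ) :
    derivative^[m] (legendreP l)
      = C (1 / (2 ^ l * (Nat.factorial l) : ℝ)) * derivative^[l + m] (rodU l) := by
  unfold legendreP rodU
  rw [iterate_derivative_C_mul, add_comm l m, Function.iterate_add_apply]

lemma natDegree_legendreP_le (l : ℕ) : (legendreP l).natDegree ≤ l := by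
  unfold legendreP
  refine (natDegree_C_mul_le _ _).trans ?_
  refine (natDegree_iterate_derivative _ _).trans ?_
  have h1 : (((X : ℝ[X]) ^ 2 - 1) ^ l).natDegree ≤ 2 * l := by
    refine (natDegree_pow_le).trans ?_
    have h2 : ((X : ℝ[X]) ^ 2 - 1).natDegree ≤ 2 :=
      (natDegree_sub_le _ _).trans (by simp [natDegree_X_pow])
    calc l * ((X : ℝ[X]) ^ 2 - 1).natDegree ≤ l * 2 := Nat.mul_le_mul_left _ h2
    _ = 2 * l := by ring
  omega

lemma gP_top (l : ℕ) : derivative^[l + 1] (legendreP l) = 0 :=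
  iterate_derivative_eq_zero (by have := natDegree_legendreP_le l; omega)

lemma legendreP_eval_one (l : ℕ) : (legendreP l).eval 1 = 1 := by
  have hfac : ((X : ℝ[X]) ^ 2 - 1) ^ l = (X - C 1) ^ l * (X - C (-1)) ^ l := by
    rw [← mul_pow]; norm_num; ring_nf
  unfold legendreP
  rw [hfac, iterate_derivative_mul, eval_mul, eval_C, eval_finset_sum]
  rw [Finset.sum_eq_single 0]
  · simp only [Nat.sub_zero, Nat.choose_zero_right, one_smul, Function.iterate_zero_apply,
      iterate_derivative_X_sub_pow_self, eval_mul, eval_natCast, eval_pow, eval_sub, eval_X,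
      eval_C]
    have h1 : ((1 : ℝ) - (-1)) = 2 := by norm_num
    rw [h1]
    have h2 : (2 : ℝ) ^ l ≠ 0 := by positivity
    have h3 : (l.factorial : ℝ) ≠ 0 := Nat.cast_ne_zero.mpr l.factorial_ne_zero
    field_simp
  · intro k hk hk0
    rw [Finset.mem_range] at hk
    have hlk : l - (l - k) = k := by omega
    rw [iterate_derivative_X_sub_pow, hlk]
    simp [hk0, zero_pow]
  · intro h; simp at h



lemma ode_g (l m : ℕ) :
    (1 - (X : ℝ[X]) ^ 2) * derivative^[m + 2] (legendreP l)
      - C (2 * (m + 1) : ℝ) * X * derivative^[m + 1] (legendreP l)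
      + C (((l : ℝ) - m) * ((l : ℝ) + m + 1)) * derivative^[m] (legendreP l) = 0 := by
  have h := ode_u l (l + m)
  rw [gP_eq l (m+2), gP_eq l (m+1), gP_eq l m,
    show l + (m + 2) = l + m + 2 from rfl, show l + (m + 1) = l + m + 1 from rfl]
  simp only [Nat.cast_add, map_sub, map_add, map_mul, map_one, map_zero, map_ofNat,
    map_natCast] at h ⊢
  linear_combination (-(C (1 / (2 ^ l * (Nat.factorial l) : ℝ)) : ℝ[X])) * h



/-- coefficients of the addition-theorem identity -/
noncomputable def cc (l m : ℕ) : ℝ :=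
  (if m = 0 then 1 else 2) * (Nat.factorial (l - m) : ℝ) / (Nat.factorial (l + m) : ℝ)

lemma cc_zero (l : ℕ) : cc l 0 = 1 := by
  simp [cc, Nat.factorial_ne_zero]

lemma cc_nonneg (l m : ℕ) : 0 ≤ cc l m := by
  unfold cc; positivity

lemma cc_ge (l m : ℕ) :
    (Nat.factorial (l - m) : ℝ) / (Nat.factorial (l + m) : ℝ) ≤ cc l m := by
  unfold cc
  rcases eq_or_ne m 0 with h | h
  · simp [h]
  · rw [if_neg h]
    have h1 : (0:ℝ) < (Nat.factorial (l + m) : ℝ) := by positivity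
    have h0 : (0:ℝ) < (Nat.factorial (l - m) : ℝ) := by positivity
    have : (Nat.factorial (l-m) : ℝ) ≤ 2 * (Nat.factorial (l-m) : ℝ) := by linarith
    exact (div_le_div_iff_of_pos_right h1).mpr this

lemma cc_rec (l k : ℕ) (hk : k < l) :
    (if k = 0 then 2 else 1) * cc l k
      = cc l (k + 1) * (((l : ℝ) - k) * ((l : ℝ) + k + 1)) := by
  have e1 : l - k = (l - (k + 1)) + 1 := by omega
  have e2 : l + (k + 1) = (l + k) + 1 := by omega
  have c1 : ((l - (k+1) : ℕ) : ℝ) = (l : ℝ) - (k + 1) := by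
    rw [Nat.cast_sub (by omega)]; push_cast; ring
  have c2 : ((l + k : ℕ) : ℝ) = (l : ℝ) + k := by push_cast; ring
  unfold cc
  rw [e1, e2, Nat.factorial_succ, Nat.factorial_succ]
  have h1 : ((l + k).factorial : ℝ) ≠ 0 := Nat.cast_ne_zero.mpr (Nat.factorial_ne_zero _)
  have h2 : ((l : ℝ) + k + 1) ≠ 0 := by positivity
  push_cast [c1]
  rcases eq_or_ne k 0 with h | h
  · simp only [h, reduceIte]
    field_simp
    ring
  · simp only [if_neg h]
    field_simp
    ring

lemma deriv_partial (l : ℕ) : ∀ k, k ≤ l →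
    derivative (∑ m ∈ Finset.range (k + 1),
        C (cc l m) * (1 - (X : ℝ[X]) ^ 2) ^ m * (derivative^[m] (legendreP l)) ^ 2)
      = C ((if k = 0 then 2 else 1) * cc l k) * (1 - (X : ℝ[X]) ^ 2) ^ k *
          derivative^[k] (legendreP l) * derivative^[k + 1] (legendreP l) := by
  intro k
  induction k with
  | zero =>
    intro _
    simp only [Finset.sum_range_one, pow_zero, mul_one, if_pos, reduceIte,
      Function.iterate_zero_apply, Function.iterate_one, derivative_mul, derivative_C,
      derivative_pow, zero_mul, zero_add, pow_one, Nat.cast_ofNat]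
    simp only [map_mul, map_ofNat, map_one]
    ring
  | succ k ih =>
    intro hk1
    have hODE := ode_g l k
    have hc := cc_rec l k (by omega)
    have hc' := congrArg C hc
    rw [Finset.sum_range_succ, derivative_add, ih (by omega), if_neg (Nat.succ_ne_zero k)]
    simp only [derivative_mul, derivative_C, derivative_pow, derivative_sub, derivative_one,
      derivative_X_pow, derivative_X, zero_mul, zero_add, mul_one, zero_sub, pow_one,
      Nat.cast_ofNat, Nat.cast_add, Nat.cast_one, Nat.add_sub_cancel,
      ← Function.iterate_succ_apply', Nat.succ_eq_add_one,
      show k + 1 + 1 = k + 2 from rfl, show (2:ℕ) - 1 = 1 from rfl] at hODE hc' ⊢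
    simp only [map_mul, map_add, map_sub, map_one, map_zero, map_ofNat, map_natCast,
      Nat.cast_add, Nat.cast_one] at hODE hc' ⊢
    linear_combination (C (cc l (k + 1)) * (1 - (X : ℝ[X]) ^ 2) ^ k *
        derivative^[k + 1] (legendreP l)) * hODE
      + ((1 - (X : ℝ[X]) ^ 2) ^ k * derivative^[k + 1] (legendreP l) *
        derivative^[k] (legendreP l)) * hc'

lemma SS_eq_one (l : ℕ) :
    (∑ m ∈ Finset.range (l + 1),
      C (cc l m) * (1 - (X : ℝ[X]) ^ 2) ^ m * (derivative^[m] (legendreP l)) ^ 2) = 1 := by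
  set S : ℝ[X] := ∑ m ∈ Finset.range (l + 1),
      C (cc l m) * (1 - (X : ℝ[X]) ^ 2) ^ m * (derivative^[m] (legendreP l)) ^ 2 with hSdef
  have hd : derivative S = 0 := by
    rw [hSdef, deriv_partial l l le_rfl, gP_top, mul_zero]
  have hC := eq_C_of_derivative_eq_zero hd
  have he : S.eval 1 = S.coeff 0 := by rw [hC]; simp
  have he1 : S.eval 1 = 1 := by
    rw [hSdef, eval_finset_sum, Finset.sum_eq_single 0]
    · simp [cc_zero, legendreP_eval_one]
    · intro k _ hk0
      simp [zero_pow hk0]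
    · intro h; simp at h
  rw [hC, ← he, he1, map_one]

lemma key_ineq (l m : ℕ) (hm : m ≤ l) (x : ℝ) (hx : x ^ 2 ≤ 1) :
    ((l - m).factorial : ℝ) / ((l + m).factorial : ℝ) *
      ((1 - x ^ 2) ^ m * ((derivative^[m] (legendreP l)).eval x) ^ 2) ≤ 1 := by
  have hS := congrArg (eval x) (SS_eq_one l)
  simp only [eval_finset_sum, eval_mul, eval_pow, eval_sub, eval_one, eval_X, eval_C] at hS
  have h1x : (0:ℝ) ≤ 1 - x ^ 2 := by linarith
  have hterm : ∀ j ∈ Finset.range (l + 1), (0:ℝ) ≤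
      cc l j * (1 - x ^ 2) ^ j * ((derivative^[j] (legendreP l)).eval x) ^ 2 := by
    intro j _
    have := cc_nonneg l j
    positivity
  have hsingle := Finset.single_le_sum hterm (Finset.mem_range.mpr (by omega : m < l + 1))
  rw [hS] at hsingle
  have hrest : (0:ℝ) ≤ (1 - x ^ 2) ^ m * ((derivative^[m] (legendreP l)).eval x) ^ 2 := by
    positivity
  calc ((l - m).factorial : ℝ) / ((l + m).factorial : ℝ) *
      ((1 - x ^ 2) ^ m * ((derivative^[m] (legendreP l)).eval x) ^ 2)
      ≤ cc l m * ((1 - x ^ 2) ^ m * ((derivative^[m] (legendreP l)).eval x) ^ 2) :=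
        mul_le_mul_of_nonneg_right (cc_ge l m) hrest
    _ ≤ 1 := by rw [← mul_assoc] at *; exact hsingle



lemma sqrt_pow_comm {a : ℝ} (ha : 0 ≤ a) (n : ℕ) :
    Real.sqrt a ^ n = Real.sqrt (a ^ n) := by
  induction n with
  | zero => simp
  | succ k ih => rw [pow_succ, pow_succ, ih, ← Real.sqrt_mul (pow_nonneg ha _)]

/-- the normalized associated Legendre bound -/
lemma normP_le (l m : ℕ) (hm : m ≤ l) (θ : ℝ) :
    Real.sqrt ((Nat.factorial (l - m) : ℝ) / (Nat.factorial (l + m))) *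
      |assocLegendre l m (Real.cos θ)| ≤ 1 := by
  set x := Real.cos θ with hx
  have hx2 : x ^ 2 ≤ 1 := Real.cos_sq_le_one θ
  have h1x : (0:ℝ) ≤ 1 - x ^ 2 := by linarith
  have habs : |assocLegendre l m x|
      = Real.sqrt ((1 - x ^ 2) ^ m) * |(derivative^[m] (legendreP l)).eval x| := by
    unfold assocLegendre
    rw [abs_mul, abs_mul, abs_pow, abs_pow, abs_neg, abs_one, one_pow, one_mul,
      abs_of_nonneg (Real.sqrt_nonneg _), sqrt_pow_comm h1x]
  rw [habs, ← mul_assoc]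
  have hratio : (0:ℝ) ≤ ((l - m).factorial : ℝ) / ((l + m).factorial : ℝ) := by positivity
  rw [← Real.sqrt_mul hratio, ← Real.sqrt_sq_eq_abs, ← Real.sqrt_mul (by positivity)]
  rw [show ((l - m).factorial : ℝ) / ((l + m).factorial : ℝ) * (1 - x ^ 2) ^ m *
      ((derivative^[m] (legendreP l)).eval x) ^ 2
    = ((l - m).factorial : ℝ) / ((l + m).factorial : ℝ) *
      ((1 - x ^ 2) ^ m * ((derivative^[m] (legendreP l)).eval x) ^ 2) from by ring]
  calc Real.sqrt _ ≤ Real.sqrt 1 := Real.sqrt_le_sqrt (key_ineq l m hm x hx2)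
  _ = 1 := Real.sqrt_one

/-- For every degree `ℓ ≥ 0`, order `−ℓ ≤ m ≤ ℓ`, and point `(λ,θ)`, the spherical
harmonic satisfies `|Y_ℓ^m(λ,θ)| ≤ √((2ℓ+1)/(4π))`. -/
theorem sphY_abs_le (l : ℕ) (m : ℤ) (hm : m.natAbs ≤ l) (lam θ : ℝ) :
    ‖sphY l m lam θ‖ ≤ Real.sqrt ((2 * l + 1) / (4 * Real.pi)) := by
  have hexp : ∀ a b : ℝ, ‖Complex.exp (Complex.I * (a:ℂ) * (b:ℂ))‖ = 1 := by
    intro a b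
    rw [show Complex.I * (a:ℂ) * (b:ℂ) = ((a * b : ℝ) : ℂ) * Complex.I by push_cast; ring,
      Complex.norm_exp_ofReal_mul_I]
  have main : ∀ m' : ℕ, m' ≤ l →
      |Real.sqrt ((2 * l + 1) / (4 * Real.pi)) *
        Real.sqrt ((Nat.factorial (l - m') : ℝ) / (Nat.factorial (l + m'))) *
        assocLegendre l m' (Real.cos θ)| ≤ Real.sqrt ((2 * l + 1) / (4 * Real.pi)) := by
    intro m' hm'
    rw [abs_mul, abs_mul, abs_of_nonneg (Real.sqrt_nonneg _),
      abs_of_nonneg (Real.sqrt_nonneg _), mul_assoc]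
    exact mul_le_of_le_one_right (Real.sqrt_nonneg _) (normP_le l m' hm' θ)
  unfold sphY
  split_ifs with h
  · rw [norm_mul, hexp, mul_one, Complex.norm_real, Real.norm_eq_abs]
    have : m.toNat = m.natAbs := by omega
    rw [this]
    exact main m.natAbs hm
  · have hn1 : ‖(-1 : ℂ)‖ = 1 := by simp
    rw [norm_mul, norm_pow, hn1, one_pow, one_mul, Complex.norm_conj, norm_mul, hexp, mul_one,
      Complex.norm_real, Real.norm_eq_abs]
    exact main m.natAbs hm
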